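/- Let α = (α_n)_{n≥0} be a bounded sequence of positive real numbers, let W_α be the associated unilateral weighted shift on ℓ²(ℤ≥0), and let λ ∈ (0,1). Then {2√(λ-λ²)·γ : γ ∈ σ(W_α)} ⊆ σ(M_λ(W_α)), where M_λ(W_α) is the unilateral weighted shift with weight sequence (λα_n + (1-λ)α_{n+1})_{n≥0} and σ denotes the spectrum. In particular, 2√(λ-λ²)·r(W_α) ≤ r(M_λ(W_α)), where r denotes the spectral radius. -/

import Mathlib

open ContinuousLinearMap
open Filter Topology

set_option maxHeartbeats 2000000

noncomputable abbrev wsH := lp (fun _ : ℕ => ℂ) 2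
noncomputable abbrev wsE (n : ℕ) : wsH := lp.single 2 n (1 : ℂ)

lemma wsAux_hasSum (T : wsH →L[ℂ] wsH) (v : ℕ → ℂ) (m : ℕ)
    (hT : ∀ k, T (wsE k) = v k • wsE (k + m)) (x : wsH) :
    HasSum (fun k => lp.single 2 (k + m) (v k * x k)) (T x) := by
  have h := lp.hasSum_single (E := fun _ : ℕ => ℂ) (p := 2) (by norm_num) x
  have h2 := h.mapL T
  convert h2 using 2 with k
  have h3 : lp.single 2 k (x k : ℂ) = x k • wsE k := by
    rw [← lp.single_smul]; simp [smul_eq_mul]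
  rw [h3, map_smul, hT, smul_smul, ← lp.single_smul]
  simp [smul_eq_mul, mul_comm]

lemma wsAux_coord (T : wsH →L[ℂ] wsH) (v : ℕ → ℂ) (m : ℕ)
    (hT : ∀ k, T (wsE k) = v k • wsE (k + m)) (x : wsH) (i : ℕ) :
    (T x) i = if m ≤ i then v (i - m) * x (i - m) else 0 := by
  have hs := wsAux_hasSum T v m hT x
  have h2 := hs.mapL (innerSL ℂ (wsE i))
  have h3 : ∀ f : wsH, (innerSL ℂ (wsE i)) f = f i := by
    intro f
    simp only [innerSL_apply_apply, wsE]
    rw [lp.inner_single_left]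
    simp
  rw [h3] at h2
  have h4 : ∀ k, (innerSL ℂ (wsE i)) (lp.single 2 (k + m) (v k * x k))
      = if i = k + m then v k * x k else 0 := by
    intro k
    rw [h3]
    rw [lp.single_apply, Pi.single_apply]
  simp only [h4] at h2
  by_cases hmi : m ≤ i
  · rw [if_pos hmi]
    have h5 : HasSum (fun k => if i = k + m then v k * x k else 0)
        (if i = (i - m) + m then v (i - m) * x (i - m) else 0) := by
      apply hasSum_single (i - m)
      intro b hb
      rw [if_neg]
      omega
    rw [if_pos (by omega)] at h5
    exact h2.unique h5
  · rw [if_neg hmi]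
    have h5 : (fun k => if i = k + m then v k * x k else 0) = fun _ => 0 := by
      funext k; rw [if_neg]; omega
    rw [h5] at h2
    exact h2.unique hasSum_zero

lemma wsAux_norm_le (T : wsH →L[ℂ] wsH) (v : ℕ → ℂ) (m : ℕ)
    (hT : ∀ k, T (wsE k) = v k • wsE (k + m)) (s : ℝ) (hs : 0 ≤ s)
    (hv : ∀ k, ‖v k‖ ≤ s) : ‖T‖ ≤ s := by
  refine T.opNorm_le_bound hs fun x => ?_
  have hsum := wsAux_hasSum T v m hT x
  have htend := Filter.Tendsto.norm hsum
  refine le_of_tendsto htend (Eventually.of_forall fun F => ?_)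
  set g : ℕ → ℂ := fun j => v (j - m) * x (j - m) with hg
  have hinj : ∀ a ∈ F, ∀ b ∈ F, a + m = b + m → a = b := by omega
  have hre : ∑ k ∈ F, lp.single 2 (k + m) (v k * x k)
      = ∑ j ∈ F.image (· + m), lp.single 2 j (g j) := by
    rw [Finset.sum_image hinj]
    refine Finset.sum_congr rfl fun k _ => ?_
    simp [hg]
  rw [hre]
  have hn := lp.norm_sum_single (p := 2) (by norm_num) g (F.image (· + m))
  have h2 : ((2 : ENNReal)).toReal = (2 : ℝ) := by norm_num
  rw [h2] at hn
  have hsum2 : ∑ j ∈ F.image (· + m), ‖g j‖ ^ (2:ℝ) = ∑ k ∈ F, ‖v k * x k‖ ^ (2:ℝ) := by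
    rw [Finset.sum_image hinj]
    refine Finset.sum_congr rfl fun k _ => ?_
    simp [hg]
  rw [hsum2] at hn
  have hb : ∑ k ∈ F, ‖v k * x k‖ ^ (2:ℝ) ≤ (s * ‖x‖) ^ (2:ℝ) := by
    have hxb := lp.sum_rpow_le_norm_rpow (p := 2) (by norm_num) x F
    rw [h2] at hxb
    have step : ∀ k ∈ F, ‖v k * x k‖ ^ (2:ℝ) ≤ s ^ (2:ℝ) * ‖x k‖ ^ (2:ℝ) := by
      intro k _
      rw [← Real.mul_rpow hs (norm_nonneg _)]
      apply Real.rpow_le_rpow (norm_nonneg _) _ (by norm_num)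
      rw [norm_mul]
      exact mul_le_mul_of_nonneg_right (hv k) (norm_nonneg _)
    calc ∑ k ∈ F, ‖v k * x k‖ ^ (2:ℝ) ≤ ∑ k ∈ F, s ^ (2:ℝ) * ‖x k‖ ^ (2:ℝ) :=
          Finset.sum_le_sum step
      _ = s ^ (2:ℝ) * ∑ k ∈ F, ‖x k‖ ^ (2:ℝ) := by rw [Finset.mul_sum]
      _ ≤ s ^ (2:ℝ) * ‖x‖ ^ (2:ℝ) := by
          apply mul_le_mul_of_nonneg_left hxb (Real.rpow_nonneg hs 2)
      _ = (s * ‖x‖) ^ (2:ℝ) := (Real.mul_rpow hs (norm_nonneg _)).symm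
  rw [← hn] at hb
  have h3 := Real.rpow_le_rpow (Real.rpow_nonneg (norm_nonneg _) 2) hb
    (by norm_num : (0:ℝ) ≤ 1/2)
  rwa [← Real.rpow_mul (norm_nonneg _), ← Real.rpow_mul (mul_nonneg hs (norm_nonneg _)),
    (by norm_num : (2:ℝ) * (1/2) = 1), Real.rpow_one, Real.rpow_one] at h3

lemma wsAux_pow (T : wsH →L[ℂ] wsH) (v : ℕ → ℂ)
    (hT : ∀ k, T (wsE k) = v k • wsE (k + 1)) (n k : ℕ) :
    (T ^ n) (wsE k) = (∏ j ∈ Finset.range n, v (k + j)) • wsE (k + n) := by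
  induction n generalizing k with
  | zero => simp [ContinuousLinearMap.one_apply]
  | succ n ih =>
    rw [pow_succ', ContinuousLinearMap.mul_apply, ih, map_smul, hT, smul_smul,
      ← Finset.prod_range_succ, add_assoc]

lemma wsAux_rpow_one (d : ℝ) (hd : 0 < d) :
    Tendsto (fun n : ℕ => d ^ (1 / (n : ℝ))) atTop (𝓝 1) := by
  have h0 : Tendsto (fun n : ℕ => 1 / (n : ℝ)) atTop (𝓝 0) :=
    tendsto_one_div_atTop_nhds_zero_nat
  have h1 : Tendsto (fun n : ℕ => Real.log d * (1 / (n : ℝ))) atTop (𝓝 0) := by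
    simpa using h0.const_mul (Real.log d)
  have h2 := (Real.continuous_exp.tendsto 0).comp h1
  simp only [Real.exp_zero] at h2
  convert h2 using 2 with n
  rw [Real.rpow_def_of_pos hd]
  rfl

lemma wsAux_gelfand (A : wsH →L[ℂ] wsH) :
    Tendsto (fun n : ℕ => ‖A ^ n‖ ^ (1 / (n : ℝ))) atTop
      (𝓝 (spectralRadius ℂ A).toReal) := by
  haveI : Nontrivial wsH := by
    refine ⟨wsE 0, 0, fun h => ?_⟩
    have h1 : (wsE 0 : ∀ i : ℕ, ℂ) 0 = (1 : ℂ) := by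
      simp [wsE, lp.single_apply_self]
    rw [h] at h1
    simp at h1
  have h := spectrum.pow_norm_pow_one_div_tendsto_nhds_spectralRadius A
  have hfin : spectralRadius ℂ A ≠ ⊤ :=
    ((spectrum.spectralRadius_le_nnnorm (𝕜 := ℂ) A).trans_lt ENNReal.coe_lt_top).ne
  have h2 := (ENNReal.tendsto_toReal hfin).comp h
  convert h2 using 2 with n
  simp only [Function.comp_apply]
  rw [ENNReal.toReal_ofReal (Real.rpow_nonneg (norm_nonneg _) _)]

lemma wsAux_norm_single (k : ℕ) : ‖wsE k‖ = 1 := by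
  have := lp.norm_single (E := fun _ : ℕ => ℂ) (p := 2) (by norm_num) k (1 : ℂ)
  simpa using this

lemma wsAux_norm_prod (β : ℕ → ℝ) (hβ : ∀ n, 0 < β n) (k n : ℕ) :
    ‖∏ j ∈ Finset.range n, ((β (k + j) : ℝ) : ℂ)‖ = ∏ j ∈ Finset.range n, β (k + j) := by
  rw [norm_prod]
  refine Finset.prod_congr rfl fun j _ => ?_
  rw [Complex.norm_real, Real.norm_eq_abs, abs_of_pos (hβ _)]

lemma wsAux_prod_sqrt (f : ℕ → ℝ) (hf : ∀ j, 0 ≤ f j) (n : ℕ) :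
    ∏ j ∈ Finset.range n, Real.sqrt (f j) = Real.sqrt (∏ j ∈ Finset.range n, f j) := by
  induction n with
  | zero => simp
  | succ n ih =>
    rw [Finset.prod_range_succ, Finset.prod_range_succ, ih,
      Real.sqrt_mul (Finset.prod_nonneg fun j _ => hf j)]

lemma wsAux_zero_mem (M : wsH →L[ℂ] wsH) (β : ℕ → ℝ)
    (hM : ∀ n, M (wsE n) = ((β n : ℝ) : ℂ) • wsE (n + 1)) :
    (0 : ℂ) ∈ spectrum ℂ M := by
  rw [spectrum.mem_iff]
  intro hu
  have h1 := hu.mul_val_inv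
  set R : wsH →L[ℂ] wsH := ↑hu.unit⁻¹ with hR
  have h2 := congrArg (fun A : wsH →L[ℂ] wsH => (A (wsE 0) : ∀ i : ℕ, ℂ) 0) h1
  simp only [ContinuousLinearMap.mul_apply, ContinuousLinearMap.one_apply, map_zero,
    zero_sub, ContinuousLinearMap.neg_apply, lp.coeFn_neg, Pi.neg_apply] at h2
  have h3 := wsAux_coord M (fun n => ((β n : ℝ) : ℂ)) 1
    (by intro k; rw [hM]) (R (wsE 0)) 0
  rw [if_neg (by omega)] at h3
  rw [h3] at h2
  have h4 : (wsE 0 : ∀ i : ℕ, ℂ) 0 = 1 := by simp [wsE, lp.single_apply_self]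
  rw [h4] at h2
  rw [neg_zero] at h2
  exact one_ne_zero h2.symm

lemma wsAux_radius_le (M : wsH →L[ℂ] wsH) (β : ℕ → ℝ) (hβ : ∀ n, 0 < β n)
    (hM : ∀ n, M (wsE n) = ((β n : ℝ) : ℂ) • wsE (n + 1))
    (z : ℂ) (hz : z ≠ 0) (hzs : z ∉ spectrum ℂ M) :
    (spectralRadius ℂ M).toReal ≤ ‖z‖ := by
  have hznorm : 0 < ‖z‖ := norm_pos_iff.mpr hz
  have hu : IsUnit (algebraMap ℂ (wsH →L[ℂ] wsH) z - M) := spectrum.notMem_iff.mp hzs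
  set R : wsH →L[ℂ] wsH := ↑hu.unit⁻¹ with hR
  have h1 : (algebraMap ℂ (wsH →L[ℂ] wsH) z - M) * R = 1 := hu.mul_val_inv
  -- key product bound
  have key : ∀ k n : ℕ, ∏ j ∈ Finset.range n, β (k + j) ≤ ‖R‖ * ‖z‖ ^ (n + 1) := by
    intro k n
    set x : wsH := R (wsE k) with hx
    have heq : ∀ i : ℕ, z * x i - (M x) i = (wsE k : ∀ i : ℕ, ℂ) i := by
      intro i
      have h2 := congrArg (fun A : wsH →L[ℂ] wsH => (A (wsE k) : ∀ i : ℕ, ℂ) i) h1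
      simp only [ContinuousLinearMap.mul_apply, ContinuousLinearMap.one_apply,
        ContinuousLinearMap.sub_apply, Algebra.algebraMap_eq_smul_one,
        ContinuousLinearMap.smul_apply, ContinuousLinearMap.one_apply,
        lp.coeFn_sub, Pi.sub_apply, lp.coeFn_smul, Pi.smul_apply, smul_eq_mul] at h2
      exact h2
    have hc := wsAux_coord M (fun n => ((β n : ℝ) : ℂ)) 1 (by intro k; rw [hM]) x
    have hc0 : (M x) 0 = 0 := by rw [hc 0, if_neg (by omega)]
    have hcS : ∀ j : ℕ, (M x) (j + 1) = (β j : ℂ) * x j := by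
      intro j; rw [hc (j + 1), if_pos (by omega)]; simp
    -- coordinates below k vanish
    have hlt : ∀ i, i < k → x i = 0 := by
      intro i
      induction i with
      | zero =>
        intro h0
        have := heq 0
        rw [hc0, sub_zero, lp.single_apply, Pi.single_apply] at this
        rw [if_neg (by omega)] at this
        exact (mul_eq_zero.mp this).resolve_left hz
      | succ j ih =>
        intro hjk
        have := heq (j + 1)
        rw [hcS j, ih (by omega), mul_zero, sub_zero, lp.single_apply, Pi.single_apply] at this
        rw [if_neg (by omega)] at this
        exact (mul_eq_zero.mp this).resolve_left hz
    -- formula for coordinates above k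
    have hform : ∀ n : ℕ, x (k + n) = (∏ j ∈ Finset.range n, ((β (k + j) : ℝ) : ℂ)) / z ^ (n + 1) := by
      intro n
      induction n with
      | zero =>
        have := heq k
        have hMk : (M x) k = 0 := by
          cases k with
          | zero => exact hc0
          | succ j => rw [hcS j, hlt j (by omega), mul_zero]
        rw [hMk, sub_zero, lp.single_apply, Pi.single_apply, if_pos rfl] at this
        field_simp
        rw [mul_comm]
        simpa using this
      | succ n ih =>
        have := heq (k + n + 1)
        rw [hcS (k + n), ih, lp.single_apply, Pi.single_apply, if_neg (by omega)] at this
        have h5 : x (k + (n + 1)) = (β (k + n) : ℂ) * ((∏ j ∈ Finset.range n, ((β (k + j) : ℝ) : ℂ)) / z ^ (n + 1)) / z := by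
          rw [show k + (n + 1) = k + n + 1 by omega]
          field_simp at this ⊢
          linear_combination this
        rw [h5, Finset.prod_range_succ]
        field_simp
        ring
    -- norm bound
    have hb1 : ‖x (k + n)‖ ≤ ‖R‖ := by
      calc ‖x (k + n)‖ ≤ ‖x‖ := lp.norm_apply_le_norm (by norm_num) x (k + n)
        _ = ‖R (wsE k)‖ := by rw [hx]
        _ ≤ ‖R‖ * ‖wsE k‖ := R.le_opNorm _
        _ = ‖R‖ := by rw [wsAux_norm_single, mul_one]
    have hb2 : ‖x (k + n)‖ = (∏ j ∈ Finset.range n, β (k + j)) / ‖z‖ ^ (n + 1) := by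
      rw [hform n, norm_div, norm_pow, wsAux_norm_prod β hβ]
    rw [hb2, div_le_iff₀ (by positivity)] at hb1
    exact hb1
  -- operator norm bound
  have hMn : ∀ n : ℕ, ‖M ^ n‖ ≤ ‖R‖ * ‖z‖ ^ (n + 1) := by
    intro n
    refine wsAux_norm_le (M ^ n) (fun k => ∏ j ∈ Finset.range n, ((β (k + j) : ℝ) : ℂ)) n
      (fun k => wsAux_pow M _ (by intro k'; rw [hM]) n k) (‖R‖ * ‖z‖ ^ (n + 1))
      (by positivity) (fun k => ?_)
    rw [wsAux_norm_prod β hβ]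
    exact key k n
  -- take limits
  set C := max ‖R‖ 1 with hC
  have hC1 : (1 : ℝ) ≤ C := le_max_right _ _
  have hCpos : 0 < C * ‖z‖ := by positivity
  have hlim : Tendsto (fun n : ℕ => (C * ‖z‖) ^ (1 / (n : ℝ)) * ‖z‖) atTop (𝓝 ‖z‖) := by
    have := (wsAux_rpow_one (C * ‖z‖) hCpos).mul_const ‖z‖
    rwa [one_mul] at this
  refine le_of_tendsto_of_tendsto (wsAux_gelfand M) hlim ?_
  filter_upwards [eventually_ge_atTop 1] with n hn
  · have hMn' : ‖M ^ n‖ ≤ (C * ‖z‖) * ‖z‖ ^ n := by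
      calc ‖M ^ n‖ ≤ ‖R‖ * ‖z‖ ^ (n + 1) := hMn n
        _ ≤ C * ‖z‖ ^ (n + 1) := by
            apply mul_le_mul_of_nonneg_right (le_max_left _ _) (by positivity)
        _ = (C * ‖z‖) * ‖z‖ ^ n := by ring
    have h6 : (0 : ℝ) ≤ 1 / (n : ℝ) := by positivity
    calc ‖M ^ n‖ ^ (1 / (n : ℝ)) ≤ ((C * ‖z‖) * ‖z‖ ^ n) ^ (1 / (n : ℝ)) :=
          Real.rpow_le_rpow (norm_nonneg _) hMn' h6
      _ = (C * ‖z‖) ^ (1 / (n : ℝ)) * (‖z‖ ^ n) ^ (1 / (n : ℝ)) :=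
          Real.mul_rpow (le_of_lt hCpos) (by positivity)
      _ = (C * ‖z‖) ^ (1 / (n : ℝ)) * ‖z‖ := by
          rw [← Real.rpow_natCast ‖z‖ n, ← Real.rpow_mul (norm_nonneg _),
            mul_one_div, div_self (by exact_mod_cast (by omega : n ≠ 0)), Real.rpow_one]

lemma wsAux_disk (M : wsH →L[ℂ] wsH) (β : ℕ → ℝ) (hβ : ∀ n, 0 < β n)
    (hM : ∀ n, M (wsE n) = ((β n : ℝ) : ℂ) • wsE (n + 1))
    (w : ℂ) (hw : ‖w‖ ≤ (spectralRadius ℂ M).toReal) : w ∈ spectrum ℂ M := by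
  haveI : Nontrivial wsH := by
    refine ⟨wsE 0, 0, fun h => ?_⟩
    have h1 : (wsE 0 : ∀ i : ℕ, ℂ) 0 = (1 : ℂ) := by
      simp [wsE, lp.single_apply_self]
    rw [h] at h1
    simp at h1
  have hin : ∀ u : ℂ, ‖u‖ < (spectralRadius ℂ M).toReal → u ∈ spectrum ℂ M := by
    intro u hu
    by_contra h
    rcases eq_or_ne u 0 with rfl | hu0
    · exact h (wsAux_zero_mem M β hM)
    · exact absurd (wsAux_radius_le M β hβ hM u hu0 h) (not_le.mpr hu)
  rcases lt_or_eq_of_le hw with hlt | heq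
  · exact hin w hlt
  · rcases eq_or_lt_of_le (ENNReal.toReal_nonneg (a := spectralRadius ℂ M)) with h0 | h0
    · have : ‖w‖ = 0 := by rw [heq, ← h0]
      rw [norm_eq_zero.mp this]
      exact wsAux_zero_mem M β hM
    · -- boundary case : approximate from inside
      have hseq : Tendsto (fun n : ℕ => (1 - 1 / ((n : ℝ) + 1)) • w) atTop (𝓝 w) := by
        have h1 : Tendsto (fun n : ℕ => 1 / ((n : ℝ) + 1)) atTop (𝓝 0) :=
          tendsto_one_div_add_atTop_nhds_zero_nat
        have h2 : Tendsto (fun n : ℕ => 1 - 1 / ((n : ℝ) + 1)) atTop (𝓝 1) := by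
          simpa using (tendsto_const_nhds (x := (1:ℝ))).sub h1
        have h3 := h2.smul_const w
        rwa [one_smul] at h3
      refine (spectrum.isClosed M).mem_of_tendsto hseq (Eventually.of_forall fun n => ?_)
      apply hin
      have ht0 : 0 ≤ 1 - 1 / ((n : ℝ) + 1) := by
        have : 1 / ((n : ℝ) + 1) ≤ 1 := by
          rw [div_le_one (by positivity)]; linarith [Nat.cast_nonneg (α := ℝ) n]
        linarith
      have ht1 : 1 - 1 / ((n : ℝ) + 1) < 1 := by
        have : 0 < 1 / ((n : ℝ) + 1) := by positivity
        linarith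
      rw [norm_smul, Real.norm_eq_abs, abs_of_nonneg ht0, ← heq]
      calc (1 - 1 / ((n : ℝ) + 1)) * ‖w‖ < 1 * ‖w‖ := by
            apply mul_lt_mul_of_pos_right ht1
            rw [heq]; exact h0
        _ = ‖w‖ := one_mul _

/-- `2√(λ-λ²)·σ(W_α) ⊆ σ(M_λ(W_α))` and `2√(λ-λ²)·r(W_α) ≤ r(M_λ(W_α))` for a
unilateral weighted shift `W_α`. -/
theorem stmt4 (α : ℕ → ℝ) (hpos : ∀ n, 0 < α n) (hbdd : BddAbove (Set.range α))
    (l : ℝ) (hl : l ∈ Set.Ioo (0 : ℝ) 1)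
    (W M : lp (fun _ : ℕ => ℂ) 2 →L[ℂ] lp (fun _ : ℕ => ℂ) 2)
    (hW : ∀ n : ℕ, W (lp.single 2 n (1 : ℂ)) = ((α n : ℝ) : ℂ) • lp.single 2 (n + 1) (1 : ℂ))
    (hM : ∀ n : ℕ, M (lp.single 2 n (1 : ℂ)) =
      ((l * α n + (1 - l) * α (n + 1) : ℝ) : ℂ) • lp.single 2 (n + 1) (1 : ℂ)) :
    (fun γ : ℂ => ((2 * Real.sqrt (l - l ^ 2) : ℝ) : ℂ) * γ) '' spectrum ℂ W ⊆ spectrum ℂ M ∧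
    2 * Real.sqrt (l - l ^ 2) * (spectralRadius ℂ W).toReal ≤ (spectralRadius ℂ M).toReal := by
  obtain ⟨hl0, hl1⟩ := hl
  haveI : Nontrivial (lp (fun _ : ℕ => ℂ) 2) := by
    refine ⟨wsE 0, 0, fun h => ?_⟩
    have h1 : (wsE 0 : ∀ i : ℕ, ℂ) 0 = (1 : ℂ) := by
      simp [wsE, lp.single_apply_self]
    rw [h] at h1
    simp at h1
  set β : ℕ → ℝ := fun n => l * α n + (1 - l) * α (n + 1) with hβdef
  have hβpos : ∀ n, 0 < β n := fun n => by
    have := hpos n; have := hpos (n + 1); simp only [hβdef]; nlinarith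
  set c : ℝ := 2 * Real.sqrt (l - l ^ 2) with hcdef
  have hll : 0 < l - l ^ 2 := by nlinarith
  have hc : 0 < c := by
    have := Real.sqrt_pos.mpr hll; simp only [hcdef]; linarith
  set B : ℝ := sSup (Set.range α) with hBdef
  have hB : ∀ k, α k ≤ B := fun k => le_csSup hbdd ⟨k, rfl⟩
  have hBpos : 0 < B := lt_of_lt_of_le (hpos 0) (hB 0)
  -- AM-GM
  have hkey : ∀ n, c * Real.sqrt (α n * α (n + 1)) ≤ β n := by
    intro n
    have e1 : Real.sqrt (l - l ^ 2) * Real.sqrt (α n * α (n + 1))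
        = Real.sqrt ((l * α n) * ((1 - l) * α (n + 1))) := by
      rw [← Real.sqrt_mul hll.le]
      congr 1
      ring
    have e2 : Real.sqrt ((l * α n) * ((1 - l) * α (n + 1)))
        = Real.sqrt (l * α n) * Real.sqrt ((1 - l) * α (n + 1)) :=
      Real.sqrt_mul (mul_nonneg hl0.le (hpos n).le) _
    have h1 : c * Real.sqrt (α n * α (n + 1))
        = 2 * (Real.sqrt (l * α n) * Real.sqrt ((1 - l) * α (n + 1))) := by
      rw [hcdef, mul_assoc, e1, e2]
    rw [h1]
    have h2 := two_mul_le_add_sq (Real.sqrt (l * α n)) (Real.sqrt ((1 - l) * α (n + 1)))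
    rw [Real.sq_sqrt (mul_nonneg hl0.le (hpos n).le),
      Real.sq_sqrt (mul_nonneg (by linarith) (hpos (n + 1)).le)] at h2
    simp only [hβdef]
    linarith [h2]
  set P : ℕ → ℕ → ℝ := fun k n => ∏ j ∈ Finset.range n, α (k + j) with hPdef
  set Q : ℕ → ℕ → ℝ := fun k n => ∏ j ∈ Finset.range n, β (k + j) with hQdef
  have hPpos : ∀ k n, 0 < P k n := fun k n => Finset.prod_pos fun j _ => hpos _
  have hQpos : ∀ k n, 0 < Q k n := fun k n => Finset.prod_pos fun j _ => hβpos _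
  have hPsucc : ∀ k n, P k (n + 1) = P k n * α (k + n) := fun k n => Finset.prod_range_succ _ _
  have hPsucc' : ∀ k n, P k (n + 1) = α k * P (k + 1) n := by
    intro k n
    rw [hPdef]
    simp only
    rw [Finset.prod_range_succ', add_zero, mul_comm]
    congr 1
    exact Finset.prod_congr rfl fun j _ => by congr 1; omega
  -- claim1 : c^n * P k (n+1) ≤ B * Q k n
  have claim1 : ∀ k n, c ^ n * P k (n + 1) ≤ B * Q k n := by
    intro k n
    have hG : c ^ n * Real.sqrt (P k n * P (k + 1) n) ≤ Q k n := by
      have h3 : ∀ j ∈ Finset.range n, c * Real.sqrt (α (k + j) * α (k + j + 1)) ≤ β (k + j) :=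
        fun j _ => hkey (k + j)
      have h4 := Finset.prod_le_prod (s := Finset.range n)
        (f := fun j => c * Real.sqrt (α (k + j) * α (k + j + 1))) (g := fun j => β (k + j))
        (fun j _ => mul_nonneg hc.le (Real.sqrt_nonneg _)) h3
      calc c ^ n * Real.sqrt (P k n * P (k + 1) n)
          = ∏ j ∈ Finset.range n, (c * Real.sqrt (α (k + j) * α (k + j + 1))) := by
            rw [Finset.prod_mul_distrib, Finset.prod_const, Finset.card_range,
              wsAux_prod_sqrt _ (fun j => mul_nonneg (hpos _).le (hpos _).le)]
            congr 2
            rw [Finset.prod_mul_distrib]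
            congr 1
            exact Finset.prod_congr rfl fun j _ => by congr 1; omega
        _ ≤ Q k n := h4
    have e3 : P k (n + 1) * P k (n + 1) = (P k n * P (k + 1) n) * (α k * α (k + n)) := by
      nth_rewrite 2 [hPsucc' k n]
      rw [hPsucc k n]
      ring
    have h5 : P k (n + 1) / B ≤ Real.sqrt (P k n * P (k + 1) n) := by
      have hsq : (P k (n + 1) / B) ^ 2 ≤ P k n * P (k + 1) n := by
        rw [div_pow, div_le_iff₀ (pow_pos hBpos 2)]
        rw [sq, sq, e3]
        have hb1 := hB k
        have hb2 := hB (k + n)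
        have hp1 := hpos k
        have hp2 := hpos (k + n)
        have h9 : α k * α (k + n) ≤ B * B :=
          mul_le_mul hb1 hb2 hp2.le (hp1.le.trans hb1)
        exact mul_le_mul_of_nonneg_left h9 (le_of_lt (mul_pos (hPpos k n) (hPpos (k + 1) n)))
      calc P k (n + 1) / B = Real.sqrt ((P k (n + 1) / B) ^ 2) := by
            rw [Real.sqrt_sq (le_of_lt (div_pos (hPpos k (n + 1)) hBpos))]
        _ ≤ Real.sqrt (P k n * P (k + 1) n) := Real.sqrt_le_sqrt hsq
    have h7 : c ^ n * (P k (n + 1) / B) ≤ Q k n :=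
      le_trans (mul_le_mul_of_nonneg_left h5 (pow_nonneg hc.le n)) hG
    have h8 := mul_le_mul_of_nonneg_right h7 hBpos.le
    calc c ^ n * P k (n + 1) = c ^ n * (P k (n + 1) / B) * B := by field_simp
      _ ≤ Q k n * B := h8
      _ = B * Q k n := mul_comm _ _
  have hMshift : ∀ k, M (wsE k) = ((β k : ℝ) : ℂ) • wsE (k + 1) := fun k => hM k
  have hWshift : ∀ k, W (wsE k) = ((α k : ℝ) : ℂ) • wsE (k + 1) := fun k => hW k
  have claim2 : ∀ n k, Q k n ≤ ‖M ^ n‖ := by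
    intro n k
    have h1 := wsAux_pow M (fun j => ((β j : ℝ) : ℂ)) hMshift n k
    have h2 : ‖(M ^ n) (wsE k)‖ = Q k n := by
      rw [h1, norm_smul, wsAux_norm_prod β hβpos, wsAux_norm_single, mul_one]
    calc Q k n = ‖(M ^ n) (wsE k)‖ := h2.symm
      _ ≤ ‖M ^ n‖ * ‖wsE k‖ := (M ^ n).le_opNorm _
      _ = ‖M ^ n‖ := by rw [wsAux_norm_single, mul_one]
  have claim3 : ∀ n, ‖W ^ (n + 1)‖ ≤ B * ‖M ^ n‖ / c ^ n := by
    intro n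
    have hs : (0:ℝ) ≤ B * ‖M ^ n‖ / c ^ n :=
      div_nonneg (mul_nonneg hBpos.le (norm_nonneg _)) (pow_nonneg hc.le n)
    refine wsAux_norm_le (W ^ (n + 1)) (fun k => ∏ j ∈ Finset.range (n + 1), ((α (k + j) : ℝ) : ℂ))
      (n + 1) (fun k => wsAux_pow W _ hWshift (n + 1) k) _ hs (fun k => ?_)
    rw [wsAux_norm_prod α hpos, le_div_iff₀ (pow_pos hc n)]
    calc P k (n + 1) * c ^ n = c ^ n * P k (n + 1) := mul_comm _ _
      _ ≤ B * Q k n := claim1 k n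
      _ ≤ B * ‖M ^ n‖ := mul_le_mul_of_nonneg_left (claim2 n k) hBpos.le
  set rW := (spectralRadius ℂ W).toReal with hrW
  set rM := (spectralRadius ℂ M).toReal with hrM
  have hrMnn : (0:ℝ) ≤ rM := ENNReal.toReal_nonneg
  have hrWnn : (0:ℝ) ≤ rW := ENNReal.toReal_nonneg
  have goal2 : c * rW ≤ rM := by
    rcases eq_or_lt_of_le hrWnn with h0 | h0
    · rw [← h0, mul_zero]; exact hrMnn
    · have main : ∀ r', 0 < r' → r' < rW → c * r' ≤ rM := by
        intro r' hr'0 hr'W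
        have hev1 : ∀ᶠ m : ℕ in atTop, r' < ‖W ^ m‖ ^ (1 / (m : ℝ)) :=
          (wsAux_gelfand W).eventually (eventually_gt_nhds hr'W)
        obtain ⟨N, hN⟩ := eventually_atTop.mp hev1
        have hev2 : ∀ᶠ n : ℕ in atTop,
            c * r' * ((r' / B) ^ (1 / (n:ℝ))) ≤ ‖M ^ n‖ ^ (1 / (n:ℝ)) := by
          filter_upwards [eventually_ge_atTop (max N 1)] with n hn
          have hn1 : 1 ≤ n := le_trans (le_max_right _ _) hn
          have hnN : N ≤ n + 1 := by
            have := le_trans (le_max_left N 1) hn; omega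
          have ha := hN (n + 1) hnN
          have hWn : r' ^ (n + 1) ≤ ‖W ^ (n + 1)‖ := by
            have h1 : r' ≤ ‖W ^ (n + 1)‖ ^ (1 / ((n + 1 : ℕ) : ℝ)) := le_of_lt ha
            have h2 := pow_le_pow_left₀ hr'0.le h1 (n + 1)
            rwa [← Real.rpow_natCast (‖W ^ (n + 1)‖ ^ (1 / ((n + 1 : ℕ) : ℝ))) (n + 1),
              ← Real.rpow_mul (norm_nonneg _),
              one_div_mul_cancel (by exact_mod_cast (Nat.succ_ne_zero n)),
              Real.rpow_one] at h2
          have hMn : (c * r') ^ n * (r' / B) ≤ ‖M ^ n‖ := by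
            have h3 := claim3 n
            have h4 : c ^ n * r' ^ (n + 1) ≤ c ^ n * ‖W ^ (n + 1)‖ :=
              mul_le_mul_of_nonneg_left hWn (pow_nonneg hc.le n)
            have h5 : c ^ n * ‖W ^ (n + 1)‖ ≤ B * ‖M ^ n‖ := by
              have h5a := mul_le_mul_of_nonneg_right h3 (pow_nonneg hc.le n)
              rwa [div_mul_cancel₀ _ (ne_of_gt (pow_pos hc n)), mul_comm] at h5a
            have h6 : (c * r') ^ n * (r' / B) = c ^ n * r' ^ (n + 1) / B := by
              rw [mul_pow, pow_succ]
              field_simp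
            rw [h6, div_le_iff₀ hBpos]
            calc c ^ n * r' ^ (n + 1) ≤ B * ‖M ^ n‖ := le_trans h4 h5
              _ = ‖M ^ n‖ * B := mul_comm _ _
          have hnn : (0:ℝ) ≤ (c * r') ^ n * (r' / B) :=
            mul_nonneg (pow_nonneg (mul_nonneg hc.le hr'0.le) n)
              (div_nonneg hr'0.le hBpos.le)
          have h7 := Real.rpow_le_rpow hnn hMn (by positivity : (0:ℝ) ≤ 1 / (n:ℝ))
          have h8 : ((c * r') ^ n * (r' / B)) ^ (1/(n:ℝ))
              = (c * r') * (r' / B) ^ (1/(n:ℝ)) := by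
            rw [Real.mul_rpow (pow_nonneg (mul_nonneg hc.le hr'0.le) n)
              (div_nonneg hr'0.le hBpos.le)]
            congr 1
            rw [← Real.rpow_natCast (c * r') n, ← Real.rpow_mul (mul_nonneg hc.le hr'0.le),
              mul_one_div, div_self (by exact_mod_cast (by omega : n ≠ 0)), Real.rpow_one]
          rwa [h8] at h7
        have hlim2 : Tendsto (fun n : ℕ => c * r' * ((r' / B) ^ (1 / (n:ℝ)))) atTop
            (𝓝 (c * r')) := by
          have h9 := (wsAux_rpow_one (r' / B) (div_pos hr'0 hBpos)).const_mul (c * r')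
          simpa using h9
        exact le_of_tendsto_of_tendsto hlim2 (wsAux_gelfand M) hev2
      by_contra hcon
      push_neg at hcon
      have hr1 : rM / c < rW := by
        rw [div_lt_iff₀ hc]; linarith [hcon]
      have hrMc : (0:ℝ) ≤ rM / c := div_nonneg hrMnn hc.le
      have hr'0 : 0 < (rM / c + rW) / 2 := by linarith
      have hr'W : (rM / c + rW) / 2 < rW := by linarith
      have hle := main _ hr'0 hr'W
      have hgt : rM < c * ((rM / c + rW) / 2) := by
        have h10 : rM / c < (rM / c + rW) / 2 := by linarith
        calc rM = c * (rM / c) := by field_simp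
          _ < c * ((rM / c + rW) / 2) := by exact mul_lt_mul_of_pos_left h10 hc
      linarith
  refine ⟨?_, goal2⟩
  rintro w ⟨γ, hγ, rfl⟩
  have hγn : ‖γ‖ ≤ rW := by
    have h1 : (‖γ‖₊ : ENNReal) ≤ spectralRadius ℂ W :=
      le_iSup₂ (f := fun k (_ : k ∈ spectrum ℂ W) => (‖k‖₊ : ENNReal)) γ hγ
    have hfin : spectralRadius ℂ W ≠ ⊤ :=
      ((spectrum.spectralRadius_le_nnnorm (𝕜 := ℂ) W).trans_lt ENNReal.coe_lt_top).ne
    have h2 := ENNReal.toReal_mono hfin h1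
    simpa using h2
  show ((c : ℝ) : ℂ) * γ ∈ spectrum ℂ M
  apply wsAux_disk M β hβpos hMshift
  have hnorm : ‖((c : ℝ) : ℂ) * γ‖ = c * ‖γ‖ := by
    rw [norm_mul, Complex.norm_real, Real.norm_eq_abs, abs_of_pos hc]
  rw [hnorm]
  calc c * ‖γ‖ ≤ c * rW := mul_le_mul_of_nonneg_left hγn hc.le
    _ ≤ rM := goal2
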